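/- Let f : [0,∞) → [0,∞) be amenable. Then the following are equivalent: (i) for every b-metric space (X,d), f∘d is a semimetric and (X, f∘d) is a b-metric space; (ii) for every metric space (X,d), f∘d is a semimetric and (X, f∘d) is a b-metric space; (iii) there exists K ≥ 1 such that for every triangle triplet (a,b,c), the values f(a), f(b), f(c) can be arranged into a K-triangle triplet. (In particular the class of b-metric-preserving functions equals the class of metric-to-b-metric-preserving functions.) -/

import Mathlib

/-- A semimetric on a set `X`: nonnegative, vanishing exactly on the diagonal, symmetric. -/
def IsSemimetricOn {α : Type} (X : Set α) (d : α → α → ℝ) : Prop :=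
  (∀ x ∈ X, ∀ y ∈ X, 0 ≤ d x y) ∧
  (∀ x ∈ X, ∀ y ∈ X, (d x y = 0 ↔ x = y)) ∧
  (∀ x ∈ X, ∀ y ∈ X, d x y = d y x)

/-- A strong b-metric on `X` with relaxation constant `K`. -/
def IsStrongBMetricOn {α : Type} (X : Set α) (d : α → α → ℝ) (K : ℝ) : Prop :=
  IsSemimetricOn X d ∧ 1 ≤ K ∧
    ∀ x ∈ X, ∀ y ∈ X, ∀ z ∈ X, d x z ≤ K * d x y + d y z

/-- A b-metric on `X` with relaxation constant `K`. -/
def IsBMetricOn {α : Type} (X : Set α) (d : α → α → ℝ) (K : ℝ) : Prop :=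
  IsSemimetricOn X d ∧ 1 ≤ K ∧
    ∀ x ∈ X, ∀ y ∈ X, ∀ z ∈ X, d x z ≤ K * (d x y + d y z)

/-- A metric on `X`. -/
def IsMetricOn {α : Type} (X : Set α) (d : α → α → ℝ) : Prop :=
  IsSemimetricOn X d ∧
    ∀ x ∈ X, ∀ y ∈ X, ∀ z ∈ X, d x z ≤ d x y + d y z

/-- The set of distances realized on `X`; its `sSup` is the diameter. -/
def distSet {α : Type} (X : Set α) (d : α → α → ℝ) : Set ℝ :=
  {r : ℝ | ∃ x ∈ X, ∃ y ∈ X, d x y = r}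

/-- `(X, d)` satisfies the `K`-relaxed polygonal inequality. -/
def SatisfiesRPI {α : Type} (X : Set α) (d : α → α → ℝ) (K : ℝ) : Prop :=
  ∀ n : ℕ, ∀ x : ℕ → α, (∀ i ≤ n, x i ∈ X) →
    d (x 0) (x n) ≤ K * ∑ i ∈ Finset.range n, d (x i) (x (i + 1))

/-- `(a,b,c)` with `a ≥ b ≥ c ≥ 0` is a `K`-triangle triplet: `a ≤ K (b + c)`. -/
def IsTriangleTriplet (K a b c : ℝ) : Prop :=
  b ≤ a ∧ c ≤ b ∧ 0 ≤ c ∧ a ≤ K * (b + c)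

/-- `(a,b,c)` with `a ≥ b ≥ c ≥ 0` is a strong `K`-triangle triplet: `a ≤ K c + b`. -/
def IsStrongTriangleTriplet (K a b c : ℝ) : Prop :=
  b ≤ a ∧ c ≤ b ∧ 0 ≤ c ∧ a ≤ K * c + b

/-- The values `x, y, z` can be arranged into a `K`-triangle triplet. -/
def FormsTriangleTriplet (K x y z : ℝ) : Prop :=
  ∃ a b c : ℝ, ({a, b, c} : Multiset ℝ) = ({x, y, z} : Multiset ℝ) ∧
    IsTriangleTriplet K a b c

/-- The values `x, y, z` can be arranged into a strong `K`-triangle triplet. -/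
def FormsStrongTriangleTriplet (K x y z : ℝ) : Prop :=
  ∃ a b c : ℝ, ({a, b, c} : Multiset ℝ) = ({x, y, z} : Multiset ℝ) ∧
    IsStrongTriangleTriplet K a b c

/-- For amenable `f`, being b-metric-preserving, being
metric-to-b-metric-preserving, and the `K`-triangle-triplet condition on
triangle triplets are all equivalent. -/
-- helpers
lemma ms_swap12 (x y z : ℝ) : ({x,y,z} : Multiset ℝ) = {y,x,z} := Multiset.cons_swap x y {z}

lemma ms_swap23 (x y z : ℝ) : ({x,y,z} : Multiset ℝ) = {x,z,y} :=
  congrArg (x ::ₘ ·) (Multiset.cons_swap y z 0)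

lemma ms_rot (x y z : ℝ) : ({x,y,z} : Multiset ℝ) = {y,z,x} := by
  rw [ms_swap12, ms_swap23]

lemma forms_rot {K x y z : ℝ} (h : FormsTriangleTriplet K x y z) :
    FormsTriangleTriplet K y z x := by
  obtain ⟨a, b, c, hm, ht⟩ := h
  exact ⟨a, b, c, hm.trans (ms_rot x y z), ht⟩

lemma forms_imp {K x y z : ℝ} (hK : 0 ≤ K) (h : FormsTriangleTriplet K x y z) :
    x ≤ K * (y + z) := by
  obtain ⟨a, b, c, hm, hba, hcb, hc0, habc⟩ := h
  have hsum : a + b + c = x + y + z := by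
    have := congrArg Multiset.sum hm
    simp at this; linarith
  have hmem : x = a ∨ x = b ∨ x = c := by
    have hx : x ∈ ({x, y, z} : Multiset ℝ) := by simp
    rw [← hm] at hx
    simpa using hx
  have hxa : x ≤ a := by rcases hmem with h|h|h <;> linarith
  nlinarith [mul_nonneg hK (sub_nonneg.2 hxa)]

lemma forms_of {K x y z : ℝ} (hx : 0 ≤ x) (hy : 0 ≤ y) (hz : 0 ≤ z)
    (h1 : x ≤ K * (y + z)) (h2 : y ≤ K * (x + z)) (h3 : z ≤ K * (x + y)) :
    FormsTriangleTriplet K x y z := by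
  rcases le_total x y with hxy | hxy
  · rcases le_total y z with hyz | hyz
    · -- z ≥ y ≥ x : sorted (z, y, x)
      exact ⟨z, y, x, ((ms_rot x y z).trans (ms_swap12 y z x)).symm, hyz, hxy, hx,
        by linarith⟩
    · rcases le_total x z with hxz | hxz
      · -- y ≥ z ≥ x : sorted (y, z, x)
        exact ⟨y, z, x, (ms_rot x y z).symm, hyz, hxz, hx, by linarith⟩
      · -- y ≥ x ≥ z : sorted (y, x, z)
        exact ⟨y, x, z, (ms_swap12 x y z).symm, hxy, hxz, hz, by linarith⟩
  · rcases le_total x z with hxz | hxz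
    · -- z ≥ x ≥ y : sorted (z, x, y)
      exact ⟨z, x, y, ms_rot z x y, hxz, hxy, hy, by linarith⟩
    · rcases le_total y z with hyz | hyz
      · -- x ≥ z ≥ y : sorted (x, z, y)
        exact ⟨x, z, y, (ms_swap23 x y z).symm, hxz, hyz, hy, by linarith⟩
      · -- x ≥ y ≥ z : sorted (x, y, z)
        exact ⟨x, y, z, rfl, hxy, hyz, hz, by linarith⟩

lemma exists_triangle (a b c : ℝ) (hba : b ≤ a) (hcb : c ≤ b) (hc0 : 0 ≤ c)
    (htri : a ≤ b + c) (hapos : 0 < a) :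
    ∃ x y z : ℂ, dist x z = a ∧ dist x y = b ∧ dist y z = c := by
  have hb0 : 0 ≤ b := le_trans hc0 hcb
  set p : ℝ := (a^2 + b^2 - c^2)/(2*a) with hp
  have h2ap : 2 * a * p = a^2 + b^2 - c^2 := by
    rw [hp]; field_simp
  have hb2p2 : 0 ≤ b^2 - p^2 := by
    have key : 0 ≤ (c - (a - b)) * ((a + b) - c) := by
      apply mul_nonneg <;> nlinarith
    have : b^2 - p^2 = ((c - (a-b)) * ((a+b) - c)) * ((c + (a-b)) * ((a+b) + c)) / (2*a)^2 := by
      rw [hp]; field_simp; ring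
    rw [this]
    apply div_nonneg _ (by positivity)
    apply mul_nonneg key
    apply mul_nonneg <;> nlinarith
  set qv : ℝ := Real.sqrt (b^2 - p^2) with hq
  have hqv2 : qv^2 = b^2 - p^2 := Real.sq_sqrt hb2p2
  refine ⟨0, ⟨p, qv⟩, ⟨a, 0⟩, ?_, ?_, ?_⟩
  · rw [Complex.dist_eq_re_im]
    simp
    rw [Real.sqrt_sq hapos.le]
  · rw [Complex.dist_eq_re_im]
    simp
    rw [show p^2 + qv^2 = b^2 by linarith, Real.sqrt_sq hb0]
  · rw [Complex.dist_eq_re_im]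
    simp
    rw [show (p - a)^2 + qv^2 = c^2 by nlinarith [h2ap, hqv2], Real.sqrt_sq hc0]

lemma T_to_bmetric (f : ℝ → ℝ)
    (hf : ∀ x : ℝ, 0 ≤ x → 0 ≤ f x)
    (hamen : ∀ x : ℝ, 0 ≤ x → (f x = 0 ↔ x = 0))
    {K : ℝ} (hK : 1 ≤ K)
    (hT : ∀ a b c : ℝ, IsTriangleTriplet 1 a b c → FormsTriangleTriplet K (f a) (f b) (f c))
    {α : Type} (X : Set α) (d : α → α → ℝ) {K₀ : ℝ} (hd : IsBMetricOn X d K₀) :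
    IsSemimetricOn X (fun x y => f (d x y)) ∧
      ∃ K' : ℝ, IsBMetricOn X (fun x y => f (d x y)) K' := by
  obtain ⟨⟨hnn, hzero, hsymm⟩, hK₀, htri⟩ := hd
  have hK0 : 0 ≤ K := by linarith
  have hsemi : IsSemimetricOn X (fun x y => f (d x y)) := by
    refine ⟨fun x hx y hy => hf _ (hnn x hx y hy), fun x hx y hy => ?_,
      fun x hx y hy => by simp [hsymm x hx y hy]⟩
    simp only
    rw [hamen _ (hnn x hx y hy)]
    exact hzero x hx y hy
  have hdouble : ∀ a b : ℝ, 0 ≤ a → 0 ≤ b → a ≤ 2 * b → f a ≤ K * (f b + f b) := by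
    intro a b ha hb hab
    rcases le_total b a with h | h
    · exact forms_imp hK0 (hT a b b ⟨h, le_refl b, hb, by linarith⟩)
    · have h1 := hT b b a ⟨le_refl b, h, ha, by linarith⟩
      exact forms_imp hK0 (forms_rot (forms_rot h1))
  have hiter : ∀ n : ℕ, ∀ a b : ℝ, 0 ≤ a → 0 ≤ b → a ≤ 2^(n+1) * b →
      f a ≤ (2*K)^(n+1) * f b := by
    intro n
    induction n with
    | zero =>
      intro a b ha hb hab
      have := hdouble a b ha hb (by norm_num at hab; linarith)
      calc f a ≤ K * (f b + f b) := this
        _ = (2*K)^(0+1) * f b := by ring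
    | succ n ih =>
      intro a b ha hb hab
      have hb2 : (0:ℝ) ≤ 2 * b := by linarith
      have h1 : f a ≤ (2*K)^(n+1) * f (2*b) := by
        apply ih a (2*b) ha hb2
        calc a ≤ 2^(n+1+1) * b := hab
          _ = 2^(n+1) * (2*b) := by ring
      have h2 : f (2*b) ≤ 2*K * f b := by
        have := hdouble (2*b) b hb2 hb (le_refl _)
        linarith
      have hpow : (0:ℝ) ≤ (2*K)^(n+1) := by positivity
      calc f a ≤ (2*K)^(n+1) * f (2*b) := h1
        _ ≤ (2*K)^(n+1) * (2*K * f b) := by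
            apply mul_le_mul_of_nonneg_left h2 hpow
        _ = (2*K)^(n+1+1) * f b := by ring
  obtain ⟨n, hn⟩ := pow_unbounded_of_one_lt K₀ (by norm_num : (1:ℝ) < 2)
  set K' : ℝ := (2*K)^(n+1) with hK'
  have hK'1 : 1 ≤ K' := by
    apply one_le_pow₀ (by linarith : (1:ℝ) ≤ 2*K)
  refine ⟨hsemi, K', hsemi, hK'1, ?_⟩
  intro x hx y hy z hz
  simp only
  have hq : 0 ≤ d x y := hnn x hx y hy
  have hr : 0 ≤ d y z := hnn y hy z hz
  have hp : 0 ≤ d x z := hnn x hx z hz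
  have hpqr : d x z ≤ K₀ * (d x y + d y z) := htri x hx y hy z hz
  have hfq : 0 ≤ f (d x y) := hf _ hq
  have hfr : 0 ≤ f (d y z) := hf _ hr
  have hK'0 : (0:ℝ) ≤ K' := by linarith
  rcases le_total (d x y) (d y z) with h | h
  · have : d x z ≤ 2^(n+1) * d y z := by
      have h2 : K₀ * (d x y + d y z) ≤ K₀ * (2 * d y z) :=
        mul_le_mul_of_nonneg_left (by linarith) (by linarith)
      have h3 : K₀ * (2 * d y z) ≤ 2^n * (2 * d y z) :=
        mul_le_mul_of_nonneg_right hn.le (by linarith)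
      calc d x z ≤ K₀ * (d x y + d y z) := hpqr
        _ ≤ 2^n * (2 * d y z) := le_trans h2 h3
        _ = 2^(n+1) * d y z := by ring
    have := hiter n (d x z) (d y z) hp hr this
    nlinarith
  · have : d x z ≤ 2^(n+1) * d x y := by
      have h2 : K₀ * (d x y + d y z) ≤ K₀ * (2 * d x y) :=
        mul_le_mul_of_nonneg_left (by linarith) (by linarith)
      have h3 : K₀ * (2 * d x y) ≤ 2^n * (2 * d x y) :=
        mul_le_mul_of_nonneg_right hn.le (by linarith)
      calc d x z ≤ K₀ * (d x y + d y z) := hpqr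
        _ ≤ 2^n * (2 * d x y) := le_trans h2 h3
        _ = 2^(n+1) * d x y := by ring
    have := hiter n (d x z) (d x y) hp hq this
    nlinarith

theorem bmetric_preserving_characterization (f : ℝ → ℝ)
    (hf : ∀ x : ℝ, 0 ≤ x → 0 ≤ f x)
    (hamen : ∀ x : ℝ, 0 ≤ x → (f x = 0 ↔ x = 0)) :
    ((∀ (α : Type) (X : Set α) (d : α → α → ℝ), X.Nonempty →
        (∃ K : ℝ, IsBMetricOn X d K) →
          IsSemimetricOn X (fun x y => f (d x y)) ∧
          ∃ K' : ℝ, IsBMetricOn X (fun x y => f (d x y)) K') ↔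
      (∃ K : ℝ, 1 ≤ K ∧ ∀ a b c : ℝ, IsTriangleTriplet 1 a b c →
        FormsTriangleTriplet K (f a) (f b) (f c))) ∧
    ((∀ (α : Type) (X : Set α) (d : α → α → ℝ), X.Nonempty →
        IsMetricOn X d →
          IsSemimetricOn X (fun x y => f (d x y)) ∧
          ∃ K' : ℝ, IsBMetricOn X (fun x y => f (d x y)) K') ↔
      (∃ K : ℝ, 1 ≤ K ∧ ∀ a b c : ℝ, IsTriangleTriplet 1 a b c →
        FormsTriangleTriplet K (f a) (f b) (f c))) := by
  have hmb : ∀ (α : Type) (X : Set α) (d : α → α → ℝ), IsMetricOn X d → IsBMetricOn X d 1 := by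
    rintro α X d ⟨hsemi, htri⟩
    exact ⟨hsemi, le_refl 1, fun x hx y hy z hz => by
      have := htri x hx y hy z hz; linarith⟩
  have hTPb : (∃ K : ℝ, 1 ≤ K ∧ ∀ a b c : ℝ, IsTriangleTriplet 1 a b c →
        FormsTriangleTriplet K (f a) (f b) (f c)) →
      ∀ (α : Type) (X : Set α) (d : α → α → ℝ), X.Nonempty →
        (∃ K : ℝ, IsBMetricOn X d K) →
          IsSemimetricOn X (fun x y => f (d x y)) ∧
          ∃ K' : ℝ, IsBMetricOn X (fun x y => f (d x y)) K' := by
    rintro ⟨K, hK, hT⟩ α X d _ ⟨K₀, hd⟩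
    exact T_to_bmetric f hf hamen hK hT X d hd
  have hPmT : (∀ (α : Type) (X : Set α) (d : α → α → ℝ), X.Nonempty →
        IsMetricOn X d →
          IsSemimetricOn X (fun x y => f (d x y)) ∧
          ∃ K' : ℝ, IsBMetricOn X (fun x y => f (d x y)) K') →
      (∃ K : ℝ, 1 ≤ K ∧ ∀ a b c : ℝ, IsTriangleTriplet 1 a b c →
        FormsTriangleTriplet K (f a) (f b) (f c)) := by
    intro h
    have hmet : IsMetricOn (Set.univ : Set ℂ) (fun z w => dist z w) :=
      ⟨⟨fun x _ y _ => dist_nonneg, fun x _ y _ => dist_eq_zero,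
        fun x _ y _ => dist_comm x y⟩, fun x _ y _ z _ => dist_triangle x y z⟩
    obtain ⟨-, K', -, hK'1, hbm⟩ := h ℂ Set.univ (fun z w => dist z w) ⟨0, trivial⟩ hmet
    refine ⟨K', hK'1, ?_⟩
    rintro a b c ⟨hba, hcb, hc0, htri⟩
    have hb0 : 0 ≤ b := le_trans hc0 hcb
    have ha0 : 0 ≤ a := le_trans hb0 hba
    have hK'0 : (0:ℝ) ≤ K' := by linarith
    rcases eq_or_lt_of_le ha0 with heq | hapos
    · have hbz : b = 0 := le_antisymm (heq ▸ hba) hb0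
      have hcz : c = 0 := le_antisymm (hbz ▸ hcb) hc0
      have hf0 : f 0 = 0 := (hamen 0 le_rfl).2 rfl
      rw [← heq, hbz, hcz, hf0]
      exact ⟨0, 0, 0, rfl, le_refl 0, le_refl 0, le_refl 0, by nlinarith⟩
    · obtain ⟨x, y, z, hxz, hxy, hyz⟩ := exists_triangle a b c hba hcb hc0 (by linarith) hapos
      have e1 := hbm x trivial y trivial z trivial
      have e2 := hbm x trivial z trivial y trivial
      have e3 := hbm y trivial x trivial z trivial
      simp only at e1 e2 e3
      rw [hxz, hxy, hyz] at e1
      rw [hxy, hxz, dist_comm z y, hyz] at e2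
      rw [hyz, dist_comm y x, hxy, hxz] at e3
      exact forms_of (hf a ha0) (hf b hb0) (hf c hc0) e1 e2
        (by linarith)
  constructor
  · constructor
    · intro hPb
      apply hPmT
      intro α X d hne hmet
      exact hPb α X d hne ⟨1, hmb α X d hmet⟩
    · exact hTPb
  · constructor
    · exact hPmT
    · intro hT α X d hne hmet
      exact hTPb hT α X d hne ⟨1, hmb α X d hmet⟩
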